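/- Area law for classical correlations of Gibbs distributions of two-site Hamiltonians: Let G = (V, E) be a finite simple graph, let d ≥ 2, and for each edge {u, v} ∈ E let h_{uv} : Fin d × Fin d → ℝ. For a spin configuration σ : V → Fin d set H(σ) = ∑_{{u,v}∈E} h_{uv}(σ_u, σ_v), and for β > 0 let p(σ) = e^{−βH(σ)}/Z with Z = ∑_σ e^{−βH(σ)}. For a subset I ⊆ V with complement O = V∖I, let p_I and p_O be the marginal distributions of p on configurations of I and O. Then the mutual information I(I : O) = S(p_I) + S(p_O) − S(p) (Shannon entropies in bits) satisfies I(I : O) ≤ |∂I| · log₂ d, where ∂I = {v ∈ I : there exists u ∈ O with {u, v} ∈ E} is the boundary of I. -/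

import Mathlib

open scoped BigOperators

/-- The Shannon entropy (in bits) of a function on a finite type, `S(p) = −∑ₓ p(x) log₂ p(x)`;
`Real.logb 2 0 = 0` makes the convention `0·log₂ 0 = 0` automatic. -/
noncomputable def shannonEntropy {X : Type*} [Fintype X] (p : X → ℝ) : ℝ :=
  -∑ x, p x * Real.logb 2 (p x)

lemma entropy_le_logb_card {B : Type*} [Fintype B] [Nonempty B] (w : B → ℝ)
    (h0 : ∀ b, 0 ≤ w b) (h1 : ∑ b, w b = 1) :
    -∑ b, w b * Real.logb 2 (w b) ≤ Real.logb 2 (Fintype.card B) := by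
  have hn : (0:ℝ) < (Fintype.card B : ℝ) := by exact_mod_cast Fintype.card_pos
  have hlog2 : (0:ℝ) < Real.log 2 := Real.log_pos (by norm_num)
  set n : ℝ := (Fintype.card B : ℝ)
  have key : ∀ b, -(w b * Real.logb 2 (w b)) - w b * Real.logb 2 n
      ≤ (n⁻¹ - w b) / Real.log 2 := by
    intro b
    rcases eq_or_lt_of_le (h0 b) with h | h
    · simp [← h]; positivity
    · have hx : (0:ℝ) < (n * w b)⁻¹ := by positivity
      have hlb := Real.log_le_sub_one_of_pos hx
      have hrw : Real.log ((n * w b)⁻¹) = -(Real.log (w b)) - Real.log n := by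
        rw [Real.log_inv, Real.log_mul (ne_of_gt hn) (ne_of_gt h)]; ring
      rw [hrw] at hlb
      have hw : w b * (-(Real.log (w b)) - Real.log n) ≤ n⁻¹ - w b := by
        have := mul_le_mul_of_nonneg_left hlb (le_of_lt h)
        calc w b * (-(Real.log (w b)) - Real.log n) ≤ w b * ((n * w b)⁻¹ - 1) := this
          _ = n⁻¹ - w b := by field_simp
      calc -(w b * Real.logb 2 (w b)) - w b * Real.logb 2 n
          = (w b * (-(Real.log (w b)) - Real.log n)) / Real.log 2 := by
            unfold Real.logb; ring
        _ ≤ (n⁻¹ - w b) / Real.log 2 := by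
            exact div_le_div_of_nonneg_right hw (le_of_lt hlog2)
  have hsum : ∑ b, (-(w b * Real.logb 2 (w b)) - w b * Real.logb 2 n)
      ≤ ∑ b : B, (n⁻¹ - w b) / Real.log 2 :=
    Finset.sum_le_sum (fun b _ => key b)
  have hrhs : ∑ b : B, (n⁻¹ - w b) / Real.log 2 = 0 := by
    rw [← Finset.sum_div, Finset.sum_sub_distrib, h1, Finset.sum_const, Finset.card_univ]
    simp only [n, nsmul_eq_mul]
    rw [mul_inv_cancel₀ (ne_of_gt hn)]
    simp
  have hlhs : ∑ b, (-(w b * Real.logb 2 (w b)) - w b * Real.logb 2 n)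
      = -∑ b, w b * Real.logb 2 (w b) - Real.logb 2 n := by
    rw [Finset.sum_sub_distrib, ← Finset.sum_mul, h1, Finset.sum_neg_distrib]
    ring
  linarith [hlhs ▸ hrhs ▸ hsum]

lemma mutual_info_le_middle {A C B' : Type*} [Fintype A] [Fintype C] [Fintype B']
    [Nonempty B'] [DecidableEq B']
    (π : A → B') (q : A → C → ℝ) (hq0 : ∀ a c, 0 ≤ q a c)
    (hq1 : ∑ a, ∑ c, q a c = 1)
    (f : A → ℝ) (g : B' → C → ℝ) (hf : ∀ a, 0 ≤ f a) (hg : ∀ b c, 0 ≤ g b c)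
    (hfac : ∀ a c, q a c = f a * g (π a) c) :
    shannonEntropy (fun a => ∑ c, q a c) + shannonEntropy (fun c => ∑ a, q a c)
      - shannonEntropy (fun ac : A × C => q ac.1 ac.2) ≤ Real.logb 2 (Fintype.card B') := by
  classical
  set L := Real.logb 2 with hL
  have hLmono : ∀ {x y : ℝ}, 0 < x → x ≤ y → L x ≤ L y := by
    intro x y hx hxy
    exact Real.logb_le_logb_of_le (by norm_num) hx hxy
  set qA : A → ℝ := fun a => ∑ c, q a c with hqA
  set qC : C → ℝ := fun c => ∑ a, q a c with hqC
  set qB : B' → ℝ := fun b => ∑ a ∈ Finset.univ.filter (fun a => π a = b), qA a with hqB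
  set qBC : B' → C → ℝ := fun b c => ∑ a ∈ Finset.univ.filter (fun a => π a = b), q a c
    with hqBC
  have hqA0 : ∀ a, 0 ≤ qA a := fun a => Finset.sum_nonneg fun c _ => hq0 a c
  have hqC0 : ∀ c, 0 ≤ qC c := fun c => Finset.sum_nonneg fun a _ => hq0 a c
  have hqB0 : ∀ b, 0 ≤ qB b := fun b => Finset.sum_nonneg fun a _ => hqA0 a
  have hmemfib : ∀ a : A, a ∈ Finset.univ.filter (fun a' => π a' = π a) := by
    intro a; simp
  -- positivity on support
  have hposA : ∀ a c, 0 < q a c → 0 < qA a := fun a c h =>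
    lt_of_lt_of_le h (Finset.single_le_sum (fun c' _ => hq0 a c') (Finset.mem_univ c))
  have hposC : ∀ a c, 0 < q a c → 0 < qC c := fun a c h =>
    lt_of_lt_of_le h (Finset.single_le_sum (fun a' _ => hq0 a' c) (Finset.mem_univ a))
  have hposBC : ∀ a c, 0 < q a c → 0 < qBC (π a) c := fun a c h =>
    lt_of_lt_of_le h (Finset.single_le_sum (fun a' _ => hq0 a' c) (hmemfib a))
  have hposB : ∀ a c, 0 < q a c → 0 < qB (π a) := fun a c h =>
    lt_of_lt_of_le (hposA a c h)
      (Finset.single_le_sum (fun a' _ => hqA0 a') (hmemfib a))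
  -- key pointwise identity
  have key : ∀ a c, q a c * (L (q a c) - L (qA a))
      = q a c * (L (qBC (π a) c) - L (qB (π a))) := by
    intro a c
    rcases eq_or_lt_of_le (hq0 a c) with h | h
    · rw [← h]; ring
    · have hfa : 0 < f a := by
        rcases (hf a).lt_or_eq with h' | h'
        · exact h'
        · exfalso; rw [hfac a c, ← h'] at h; simp at h
      have hga : 0 < g (π a) c := by
        rcases (hg (π a) c).lt_or_eq with h' | h'
        · exact h'
        · exfalso; rw [hfac a c, ← h'] at h; simp at h
      set gh : ℝ := ∑ c', g (π a) c' with hgh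
      set fh : ℝ := ∑ a' ∈ Finset.univ.filter (fun a' => π a' = π a), f a' with hfh
      have hghpos : 0 < gh :=
        lt_of_lt_of_le hga (Finset.single_le_sum (fun c' _ => hg _ c') (Finset.mem_univ c))
      have hfhpos : 0 < fh :=
        lt_of_lt_of_le hfa (Finset.single_le_sum (fun a' _ => hf a') (hmemfib a))
      have hA : qA a = f a * gh := by
        rw [hqA]; simp only [hfac, ← Finset.mul_sum]; rfl
      have hBC : qBC (π a) c = fh * g (π a) c := by
        rw [hqBC, hfh, Finset.sum_mul]
        apply Finset.sum_congr rfl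
        intro a' ha'
        simp only [Finset.mem_filter] at ha'
        rw [hfac a' c, ha'.2]
      have hB : qB (π a) = fh * gh := by
        rw [hqB, hfh, Finset.sum_mul]
        apply Finset.sum_congr rfl
        intro a' ha'
        simp only [Finset.mem_filter] at ha'
        rw [hqA]
        simp only [hfac, ha'.2, ← Finset.mul_sum, hgh]
      have e1 : L (q a c) - L (qA a) = L (g (π a) c) - L gh := by
        rw [hfac a c, hA, hL, Real.logb_mul (ne_of_gt hfa) (ne_of_gt hga),
          Real.logb_mul (ne_of_gt hfa) (ne_of_gt hghpos)]
        ring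
      have e2 : L (qBC (π a) c) - L (qB (π a)) = L (g (π a) c) - L gh := by
        rw [hBC, hB, hL, Real.logb_mul (ne_of_gt hfhpos) (ne_of_gt hga),
          Real.logb_mul (ne_of_gt hfhpos) (ne_of_gt hghpos)]
        ring
      rw [e1, e2]
  -- rewrite entropies as double sums
  have hSA : shannonEntropy qA = -∑ a, ∑ c, q a c * L (qA a) := by
    unfold shannonEntropy
    congr 1
    exact Finset.sum_congr rfl fun a _ => by rw [← Finset.sum_mul]
  have hSC : shannonEntropy qC = -∑ a, ∑ c, q a c * L (qC c) := by
    unfold shannonEntropy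
    rw [Finset.sum_comm]
    congr 1
    exact Finset.sum_congr rfl fun c _ => by rw [← Finset.sum_mul]
  have hSj : shannonEntropy (fun ac : A × C => q ac.1 ac.2)
      = -∑ a, ∑ c, q a c * L (q a c) := by
    unfold shannonEntropy
    rw [Fintype.sum_prod_type]
  have main : shannonEntropy qA + shannonEntropy qC
      - shannonEntropy (fun ac : A × C => q ac.1 ac.2)
      = ∑ a, ∑ c, q a c * (L (qBC (π a) c) - L (qB (π a)) - L (qC c)) := by
    rw [hSA, hSC, hSj]
    have : ∀ a : A, (∑ c, q a c * L (q a c)) - (∑ c, q a c * L (qA a))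
        - (∑ c, q a c * L (qC c))
        = ∑ c, q a c * (L (qBC (π a) c) - L (qB (π a)) - L (qC c)) := by
      intro a
      rw [← Finset.sum_sub_distrib, ← Finset.sum_sub_distrib]
      apply Finset.sum_congr rfl
      intro c _
      have := key a c
      nlinarith [key a c]
    calc (-∑ a, ∑ c, q a c * L (qA a)) + (-∑ a, ∑ c, q a c * L (qC c))
        - (-∑ a, ∑ c, q a c * L (q a c))
        = ∑ a, ((∑ c, q a c * L (q a c)) - (∑ c, q a c * L (qA a))
            - (∑ c, q a c * L (qC c))) := by
          rw [Finset.sum_sub_distrib, Finset.sum_sub_distrib]; ring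
      _ = ∑ a, ∑ c, q a c * (L (qBC (π a) c) - L (qB (π a)) - L (qC c)) :=
          Finset.sum_congr rfl fun a _ => this a
  -- split the sum
  have split : ∑ a, ∑ c, q a c * (L (qBC (π a) c) - L (qB (π a)) - L (qC c))
      = (∑ a, ∑ c, q a c * (L (qBC (π a) c) - L (qC c)))
        + (∑ a, ∑ c, q a c * (-(L (qB (π a))))) := by
    rw [← Finset.sum_add_distrib]
    apply Finset.sum_congr rfl
    intro a _
    rw [← Finset.sum_add_distrib]
    apply Finset.sum_congr rfl
    intro c _
    ring
  -- first part nonpositive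
  have part1 : (∑ a, ∑ c, q a c * (L (qBC (π a) c) - L (qC c))) ≤ 0 := by
    apply Finset.sum_nonpos
    intro a _
    apply Finset.sum_nonpos
    intro c _
    rcases eq_or_lt_of_le (hq0 a c) with h | h
    · rw [← h]; simp
    · apply mul_nonpos_of_nonneg_of_nonpos (le_of_lt h)
      rw [sub_nonpos]
      apply hLmono (hposBC a c h)
      rw [hqBC, hqC]
      exact Finset.sum_le_sum_of_subset_of_nonneg (Finset.subset_univ _)
        (fun a' _ _ => hq0 a' c)
  -- second part: entropy of qB
  have hBsum : ∑ b, qB b = 1 := by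
    rw [hqB, Finset.sum_fiberwise Finset.univ π qA]
    exact hq1
  have part2 : (∑ a, ∑ c, q a c * (-(L (qB (π a)))))
      = -∑ b, qB b * L (qB b) := by
    have e1 : ∀ a : A, (∑ c, q a c * (-(L (qB (π a)))))
        = qA a * (-(L (qB (π a)))) := fun a => by rw [← Finset.sum_mul]
    rw [Finset.sum_congr rfl fun a _ => e1 a]
    have e2 : ∑ b, qB b * L (qB b)
        = ∑ a, qA a * L (qB (π a)) := by
      rw [← Finset.sum_fiberwise Finset.univ π (fun a => qA a * L (qB (π a)))]
      apply Finset.sum_congr rfl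
      intro b _
      rw [hqB, Finset.sum_mul]
      apply Finset.sum_congr rfl
      intro a' ha'
      simp only [Finset.mem_filter] at ha'
      rw [ha'.2]
    rw [e2, ← Finset.sum_neg_distrib]
    apply Finset.sum_congr rfl
    intro a _
    ring
  have part2le : -∑ b, qB b * L (qB b) ≤ Real.logb 2 (Fintype.card B') :=
    entropy_le_logb_card qB hqB0 hBsum
  rw [main, split, part2]
  linarith

/-- **Area law for classical correlations of Gibbs distributions of two-site Hamiltonians.**
For a finite simple graph `G = (V, E)`, local dimension `d`, symmetric two-site interactions
`h_{uv}`, energy `H(σ) = ∑_{{u,v}∈E} h_{uv}(σ_u, σ_v)` and Gibbs distribution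
`p(σ) = e^{−βH(σ)}/Z` at `β > 0`, the mutual information between the marginals on a region
`I ⊆ V` and its complement satisfies `I(I : O) ≤ |∂I|·log₂ d`, where
`∂I = {v ∈ I : ∃ u ∉ I, {u,v} ∈ E}`. -/
theorem classical_gibbs_mutual_information_area_law
    {V : Type*} [Fintype V] [DecidableEq V]
    (G : SimpleGraph V) [DecidableRel G.Adj] (d : ℕ) (hd : 2 ≤ d)
    (h : V → V → Fin d → Fin d → ℝ)
    (hsym : ∀ u v a b, h u v a b = h v u b a)
    (β : ℝ) (hβ : 0 < β)
    (Ham : (V → Fin d) → ℝ)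
    (hHam : ∀ σ, Ham σ = (1 / 2) * ∑ u, ∑ v, if G.Adj u v then h u v (σ u) (σ v) else 0)
    (Z : ℝ) (hZ : Z = ∑ σ : V → Fin d, Real.exp (-β * Ham σ))
    (p : (V → Fin d) → ℝ) (hp : ∀ σ, p σ = Real.exp (-β * Ham σ) / Z)
    (I : Finset V)
    (pI : ({v // v ∈ I} → Fin d) → ℝ)
    (hpI : ∀ τ, pI τ =
      ∑ z : {v // v ∉ I} → Fin d, p (fun v => if hv : v ∈ I then τ ⟨v, hv⟩ else z ⟨v, hv⟩))
    (pO : ({v // v ∉ I} → Fin d) → ℝ)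
    (hpO : ∀ τ, pO τ =
      ∑ z : {v // v ∈ I} → Fin d, p (fun v => if hv : v ∈ I then z ⟨v, hv⟩ else τ ⟨v, hv⟩)) :
    shannonEntropy pI + shannonEntropy pO - shannonEntropy p ≤
      ((I.filter fun v => ∃ u, u ∉ I ∧ G.Adj u v).card : ℝ) * Real.logb 2 d := by
  classical
  haveI : Nonempty (Fin d) := ⟨⟨0, by omega⟩⟩
  set Bd : Finset V := I.filter fun v => ∃ u, u ∉ I ∧ G.Adj u v with hBd
  have hBdI : ∀ {v}, v ∈ Bd → v ∈ I := fun hv => (Finset.mem_filter.mp hv).1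
  let π : ({v // v ∈ I} → Fin d) → ({v // v ∈ Bd} → Fin d) :=
    fun a b => a ⟨b.1, hBdI b.2⟩
  let glue : ({v // v ∈ I} → Fin d) → ({v // v ∉ I} → Fin d) → (V → Fin d) :=
    fun a c v => if hv : v ∈ I then a ⟨v, hv⟩ else c ⟨v, hv⟩
  let q : ({v // v ∈ I} → Fin d) → ({v // v ∉ I} → Fin d) → ℝ :=
    fun a c => p (glue a c)
  have hZpos : 0 < Z := by
    rw [hZ]
    exact Finset.sum_pos (fun σ _ => Real.exp_pos _) Finset.univ_nonempty
  have hq0 : ∀ a c, 0 ≤ q a c := by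
    intro a c
    show 0 ≤ p (glue a c)
    rw [hp]
    positivity
  set e := Equiv.piEquivPiSubtypeProd (fun v => v ∈ I) (fun _ => Fin d) with he
  have hglue : ∀ (ac : ({v // v ∈ I} → Fin d) × ({v // v ∉ I} → Fin d)),
      glue ac.1 ac.2 = e.symm ac := by
    intro ac
    funext v
    rw [he, Equiv.piEquivPiSubtypeProd_symm_apply]
  have hsum_pq : ∀ (F : ℝ → ℝ), ∑ σ : V → Fin d, F (p σ)
      = ∑ a : {v // v ∈ I} → Fin d, ∑ c : {v // v ∉ I} → Fin d, F (q a c) := by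
    intro F
    have step1 : ∑ σ : V → Fin d, F (p σ)
        = ∑ ac : ({v // v ∈ I} → Fin d) × ({v // v ∉ I} → Fin d), F (q ac.1 ac.2) := by
      apply Fintype.sum_equiv e
      intro σ
      congr 1
      show p σ = p (glue (e σ).1 (e σ).2)
      rw [hglue (e σ), Equiv.symm_apply_apply]
    rw [step1, Fintype.sum_prod_type]
  have hsump : ∑ σ : V → Fin d, p σ = 1 := by
    simp only [hp, ← Finset.sum_div, ← hZ]
    exact div_self (ne_of_gt hZpos)
  have hq1 : ∑ a : {v // v ∈ I} → Fin d, ∑ c : {v // v ∉ I} → Fin d, q a c = 1 := by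
    have h2 := hsum_pq id
    simp only [id] at h2
    rw [← h2]
    exact hsump
  let d0 : Fin d := ⟨0, by omega⟩
  let av : ({v // v ∈ I} → Fin d) → V → Fin d :=
    fun a v => if hv : v ∈ I then a ⟨v, hv⟩ else d0
  let wv : ({v // v ∈ Bd} → Fin d) → ({v // v ∉ I} → Fin d) → V → Fin d := fun b c v =>
    if hv : v ∈ Bd then b ⟨v, hv⟩ else if hv' : v ∈ I then d0 else c ⟨v, hv'⟩
  let HI : ({v // v ∈ I} → Fin d) → ℝ := fun a => (1/2) * ∑ u, ∑ v,
    if G.Adj u v ∧ u ∈ I ∧ v ∈ I then h u v (av a u) (av a v) else 0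
  let Hx : ({v // v ∈ Bd} → Fin d) → ({v // v ∉ I} → Fin d) → ℝ := fun b c =>
    (1/2) * ∑ u, ∑ v,
    if G.Adj u v ∧ ¬(u ∈ I ∧ v ∈ I) then h u v (wv b c u) (wv b c v) else 0
  have hsplit : ∀ a c, Ham (glue a c) = HI a + Hx (π a) c := by
    intro a c
    have hvert : ∀ x y, G.Adj x y → ¬(x ∈ I ∧ y ∈ I) → glue a c x = wv (π a) c x := by
      intro x y hadj hio
      by_cases hx : x ∈ I
      · have hy : y ∉ I := fun hy => hio ⟨hx, hy⟩
        have hxB : x ∈ Bd := Finset.mem_filter.mpr ⟨hx, y, hy, hadj.symm⟩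
        simp only [glue, wv, dif_pos hx, dif_pos hxB, π]
      · have hxB : x ∉ Bd := fun hh => hx (hBdI hh)
        simp only [glue, wv, dif_neg hx, dif_neg hxB]
    have hterm : ∀ u v : V, (if G.Adj u v then h u v (glue a c u) (glue a c v) else 0)
        = (if G.Adj u v ∧ u ∈ I ∧ v ∈ I then h u v (av a u) (av a v) else 0)
          + (if G.Adj u v ∧ ¬(u ∈ I ∧ v ∈ I)
              then h u v (wv (π a) c u) (wv (π a) c v) else 0) := by
      intro u v
      by_cases hadj : G.Adj u v
      · by_cases hio : u ∈ I ∧ v ∈ I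
        · rw [if_pos hadj, if_pos ⟨hadj, hio⟩, if_neg (fun hh => hh.2 hio), add_zero]
          simp only [glue, av, dif_pos hio.1, dif_pos hio.2]
        · rw [if_pos hadj, if_neg (fun hh => hio hh.2),
            if_pos ⟨hadj, hio⟩, zero_add, hvert u v hadj hio,
            hvert v u hadj.symm (fun hh => hio ⟨hh.2, hh.1⟩)]
      · rw [if_neg hadj, if_neg (fun hh => hadj hh.1), if_neg (fun hh => hadj hh.1), add_zero]
    rw [hHam]
    simp only [hterm, Finset.sum_add_distrib]
    show (1/2) * (_ + _) = _
    rw [mul_add]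
  let f : ({v // v ∈ I} → Fin d) → ℝ := fun a => Real.exp (-β * HI a) / Z
  let g : ({v // v ∈ Bd} → Fin d) → ({v // v ∉ I} → Fin d) → ℝ :=
    fun b c => Real.exp (-β * Hx b c)
  have hf : ∀ a, 0 ≤ f a := fun a => by positivity
  have hg : ∀ b c, 0 ≤ g b c := fun b c => (Real.exp_pos _).le
  have hfac : ∀ a c, q a c = f a * g (π a) c := by
    intro a c
    show p (glue a c) = (Real.exp (-β * HI a) / Z) * Real.exp (-β * Hx (π a) c)
    rw [hp, hsplit a c, div_mul_eq_mul_div, ← Real.exp_add]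
    ring_nf
  have hpIq : pI = fun a => ∑ c, q a c := by
    funext a
    rw [hpI a]
  have hpOq : pO = fun c => ∑ a, q a c := by
    funext c
    rw [hpO c]
  have hpq : shannonEntropy p = shannonEntropy
      (fun ac : ({v // v ∈ I} → Fin d) × ({v // v ∉ I} → Fin d) => q ac.1 ac.2) := by
    unfold shannonEntropy
    rw [hsum_pq (fun x => x * Real.logb 2 x), Fintype.sum_prod_type]
  have hcard : (Fintype.card ({v // v ∈ Bd} → Fin d) : ℝ) = ((d : ℝ)) ^ Bd.card := by
    rw [Fintype.card_fun, Fintype.card_coe, Fintype.card_fin]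
    push_cast
    ring
  have hmain := mutual_info_le_middle π q hq0 hq1 f g hf hg hfac
  rw [← hpIq, ← hpOq, ← hpq, hcard] at hmain
  refine hmain.trans_eq ?_
  rw [Real.logb_pow]
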